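/- For x ∈ [0,1] and positive integers m ≤ n-1, the polynomial L_n^{(m)}(x) := (1-x)^n \sum_{j=0}^{m} \binom{n-1+j}{j} x^j equals 1 - n \binom{n+m}{m} x^{m+1} \sum_{l=0}^{n-1} \binom{n-1}{l} \frac{(-x)^l}{m+l+1}. -/

import Mathlib

open Finset

private lemma key2 (k i : ℕ) :
    (i + 1) * (k + i + 1).choose (i + 1) = (k + 1) * (k + i + 1).choose i := by
  have A : (k + i + 1) * (k + i).choose i = (k + i + 1).choose (i + 1) * (i + 1) := by
    simpa [Nat.succ_eq_add_one] using Nat.add_one_mul_choose_eq (k + i) i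
  have B : (k + i + 1) * (k + i).choose k = (k + i + 1).choose (k + 1) * (k + 1) := by
    simpa [Nat.succ_eq_add_one] using Nat.add_one_mul_choose_eq (k + i) k
  have C1 : (k + i).choose i = (k + i).choose k := by
    have := Nat.choose_symm (Nat.le_add_right k i)
    simpa using this
  have C2 : (k + i + 1).choose (k + 1) = (k + i + 1).choose i := by
    have := Nat.choose_symm (show k + 1 ≤ k + i + 1 by omega)
    simpa [show k + i + 1 - (k + 1) = i by omega] using this.symm
  calc (i + 1) * (k + i + 1).choose (i + 1)
      = (k + i + 1).choose (i + 1) * (i + 1) := by ring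
    _ = (k + i + 1) * (k + i).choose i := A.symm
    _ = (k + i + 1) * (k + i).choose k := by rw [C1]
    _ = (k + i + 1).choose (k + 1) * (k + 1) := B
    _ = (k + i + 1).choose i * (k + 1) := by rw [C2]
    _ = (k + 1) * (k + i + 1).choose i := by ring

private lemma key1 (k m : ℕ) (x : ℝ) :
    (1 - x) * ∑ i ∈ range m, ((k + 1 + i).choose i : ℝ) * x ^ i
      = (∑ j ∈ range (m + 1), ((k + j).choose j : ℝ) * x ^ j)
        - ((k + 1 + m).choose m : ℝ) * x ^ m := by
  induction m with
  | zero => simp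
  | succ m ih =>
      rw [Finset.sum_range_succ, Finset.sum_range_succ (n := m + 1)]
      have hp : (k + 1 + (m + 1)).choose (m + 1)
          = (k + 1 + m).choose m + (k + 1 + m).choose (m + 1) := by
        have := Nat.choose_succ_succ (k + 1 + m) m
        simpa [show k + 1 + (m + 1) = (k + 1 + m) + 1 by ring] using this
      have hq : (k + 1 + m).choose (m + 1)
          = (k + m).choose m + (k + m).choose (m + 1) := by
        have := Nat.choose_succ_succ (k + m) m
        simpa [show k + 1 + m = (k + m) + 1 by ring] using this
      have hr : (k + (m + 1)).choose (m + 1)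
          = (k + m).choose m + (k + m).choose (m + 1) := by
        have := Nat.choose_succ_succ (k + m) m
        simpa [show k + (m + 1) = (k + m) + 1 by ring] using this
      rw [hp, hq, hr]
      push_cast
      linear_combination ih

private lemma keyT (k m : ℕ) (y : ℝ) :
    ∑ j ∈ range (m + 1), ((k + j).choose j : ℝ) * (j * y ^ (j - 1))
      = (k + 1) * ∑ i ∈ range m, ((k + 1 + i).choose i : ℝ) * y ^ i := by
  rw [Finset.sum_range_succ']
  norm_num
  rw [Finset.mul_sum]
  refine Finset.sum_congr rfl fun i _ => ?_
  have h := key2 k i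
  have hc : ((i + 1) * (k + i + 1).choose (i + 1) : ℝ)
      = ((k + 1) * (k + i + 1).choose i : ℝ) := by exact_mod_cast congrArg (Nat.cast (R := ℝ)) h
  have he : k + 1 + i = k + i + 1 := by ring
  rw [he]
  push_cast at hc ⊢
  ring_nf at hc ⊢
  linear_combination y ^ i * hc

private lemma binom (k : ℕ) (y : ℝ) :
    (1 - y) ^ k = ∑ l ∈ range (k + 1), ((k.choose l : ℝ)) * (-1) ^ l * y ^ l := by
  have := add_pow (-y) 1 k
  simp only [one_pow, mul_one] at this
  rw [show (1 : ℝ) - y = -y + 1 by ring, this]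
  refine Finset.sum_congr rfl fun l _ => ?_
  rw [neg_pow]
  ring

private lemma aux (k m : ℕ) (x : ℝ) :
    (1 - x) ^ (k + 1) * ∑ j ∈ range (m + 1), ((k + j).choose j : ℝ) * x ^ j
      = 1 - ((k : ℝ) + 1) * ((k + 1 + m).choose m : ℝ) * x ^ (m + 1) *
          ∑ l ∈ range (k + 1), ((k.choose l : ℝ)) * (-x) ^ l / ((m : ℝ) + l + 1) := by
  set c : ℝ := ((k : ℝ) + 1) * ((k + 1 + m).choose m : ℝ) with hc
  set f : ℝ → ℝ := fun y => (1 - y) ^ (k + 1) * ∑ j ∈ range (m + 1), ((k + j).choose j : ℝ) * y ^ j with hf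
  set g : ℝ → ℝ := fun y => 1 - c * ∑ l ∈ range (k + 1),
      ((k.choose l : ℝ)) * (-1) ^ l * y ^ (m + 1 + l) / ((m : ℝ) + l + 1) with hg
  have hDf : ∀ y : ℝ, HasDerivAt f (-c * y ^ m * (1 - y) ^ k) y := by
    intro y
    have h1 : HasDerivAt (fun y : ℝ => (1 - y) ^ (k + 1))
        (((k : ℝ) + 1) * (1 - y) ^ k * (-1)) y := by
      have hb : HasDerivAt (fun y : ℝ => 1 - y) (-1) y := by
        simpa using (hasDerivAt_id y).const_sub 1
      have := hb.fun_pow (k + 1)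
      simpa using this
    have h2 : HasDerivAt (fun y : ℝ => ∑ j ∈ range (m + 1), ((k + j).choose j : ℝ) * y ^ j)
        (∑ j ∈ range (m + 1), ((k + j).choose j : ℝ) * (j * y ^ (j - 1))) y := by
      refine HasDerivAt.fun_sum fun j _ => ?_
      simpa using (hasDerivAt_pow j y).const_mul ((k + j).choose j : ℝ)
    have h := h1.mul h2
    refine h.congr_deriv ?_
    rw [keyT]
    have hk1 := key1 k m y
    rw [hc]
    linear_combination ((k : ℝ) + 1) * (1 - y) ^ k * hk1
  have hDg : ∀ y : ℝ, HasDerivAt g (-c * y ^ m * (1 - y) ^ k) y := by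
    intro y
    have h2 : HasDerivAt (fun y : ℝ => ∑ l ∈ range (k + 1),
        ((k.choose l : ℝ)) * (-1) ^ l * y ^ (m + 1 + l) / ((m : ℝ) + l + 1))
        (∑ l ∈ range (k + 1), ((k.choose l : ℝ)) * (-1) ^ l * y ^ (m + l)) y := by
      refine HasDerivAt.fun_sum fun l _ => ?_
      have hp : HasDerivAt (fun y : ℝ => y ^ (m + 1 + l))
          (((m : ℝ) + 1 + l) * y ^ (m + l)) y := by
        have := hasDerivAt_pow (m + 1 + l) y
        have he : m + 1 + l - 1 = m + l := by omega
        rw [he] at this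
        push_cast at this
        convert this using 1
      have hcm := hp.const_mul (((k.choose l : ℝ)) * (-1) ^ l / ((m : ℝ) + l + 1))
      have hne : (m : ℝ) + l + 1 ≠ 0 := by positivity
      refine (hcm.congr_of_eventuallyEq (Filter.Eventually.of_forall fun z => ?_)).congr_deriv ?_
      · field_simp
      · field_simp
        ring
    have h := (h2.const_mul c).const_sub 1
    refine h.congr_deriv ?_
    have hs : ∑ l ∈ range (k + 1), ((k.choose l : ℝ)) * (-1) ^ l * y ^ (m + l)
        = y ^ m * (1 - y) ^ k := by
      rw [binom k y, Finset.mul_sum]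
      refine Finset.sum_congr rfl fun l _ => ?_
      rw [pow_add]
      ring
    rw [hs]
    ring
  have hF : ∀ y : ℝ, HasDerivAt (fun y => f y - g y) 0 y := by
    intro y
    simpa using (hDf y).fun_sub (hDg y)
  have hconst := is_const_of_deriv_eq_zero
    (fun y => ((hF y).differentiableAt)) (fun y => (hF y).deriv) x 0
  have hzero : ∀ l : ℕ, (0 : ℝ) ^ (m + 1 + l) = 0 := fun l => zero_pow (by omega)
  have f0 : f 0 = 1 := by
    simp [hf, Finset.sum_range_succ']
  have g0 : g 0 = 1 := by
    simp [hg, hzero]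
  have hfg : f x = g x := by
    have := hconst
    simp only [f0, g0] at this
    linarith [this]
  have hgform : g x = 1 - c * x ^ (m + 1) *
      ∑ l ∈ range (k + 1), ((k.choose l : ℝ)) * (-x) ^ l / ((m : ℝ) + l + 1) := by
    rw [hg]
    have : x ^ (m + 1) * ∑ l ∈ range (k + 1), ((k.choose l : ℝ)) * (-x) ^ l / ((m : ℝ) + l + 1)
        = ∑ l ∈ range (k + 1), ((k.choose l : ℝ)) * (-1) ^ l * x ^ (m + 1 + l) / ((m : ℝ) + l + 1) := by
      rw [Finset.mul_sum]
      refine Finset.sum_congr rfl fun l _ => ?_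
      rw [neg_pow, pow_add]
      ring
    rw [mul_assoc, this]
  calc f x = g x := hfg
    _ = _ := by rw [hgform, hc]

theorem stmt_3 (n m : ℕ) (hm : 1 ≤ m) (hn : 1 ≤ n) (hmn : m ≤ n - 1)
    (x : ℝ) (hx : x ∈ Set.Icc (0:ℝ) 1) :
    (1 - x) ^ n * ∑ j ∈ Finset.range (m + 1), ((n - 1 + j).choose j : ℝ) * x ^ j
      = 1 - (n : ℝ) * ((n + m).choose m : ℝ) * x ^ (m + 1) *
          ∑ l ∈ Finset.range n, ((n - 1).choose l : ℝ) * (-x) ^ l / (m + l + 1) := by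
  obtain ⟨k, rfl⟩ : ∃ k, n = k + 1 := ⟨n - 1, by omega⟩
  have hk : k + 1 - 1 = k := rfl
  rw [hk]
  have := aux k m x
  push_cast at this ⊢
  convert this using 3
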